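/- arXiv:2010.01008 — 2 statements merged into one kernel-verified Lean document; each statement's English description precedes it below -/
import Mathlib

section
/- Bailey pair #3 (shifted Slater A7): The sequences β_n = q^{n²−n}/(q;q)_{2n} and α_m defined by α_m = ((1 − q^{2m+1})/(1 − q)) · c_m, where c_m = q^{(m²−2m)/3} if m ≡ 0 (mod 3), c_m = −q^{(m²−2m)/3} if m ≡ 2 (mod 3), and c_m = 0 if m ≡ 1 (mod 3), form a Bailey pair with respect to base a = q. -/
open Finset

noncomputable def qPoch (a q : ℂ) (n : ℕ) : ℂ :=
  ∏ t ∈ Finset.range n, (1 - a * q ^ t)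

namespace BP3

variable (q : ℂ)

noncomputable def gbin (N : ℕ) (k : ℤ) : ℂ :=
  if 0 ≤ k ∧ k ≤ (N : ℤ) then
    qPoch q q N / (qPoch q q k.toNat * qPoch q q (N - k.toNat)) else 0

noncomputable def cc (j : ℤ) : ℂ :=
  if j % 3 = 0 then q ^ ((j ^ 2 - 2 * j) / 3)
  else if j % 3 = 2 then -q ^ ((j ^ 2 - 2 * j) / 3) else 0

noncomputable def TT (N : ℕ) (h a b : ℤ) : ℂ :=
  ∑ j ∈ Finset.Icc (h - (N : ℤ)) h, cc q (j + a) * q ^ (b * j) * gbin q N (h - j)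

section basic

variable {q : ℂ} (hq1 : ‖q‖ < 1)

include hq1 in
lemma one_sub_ne (t : ℕ) : (1 : ℂ) - q * q ^ t ≠ 0 := by
  intro h
  have h2 : q * q ^ t = 1 := by linear_combination -h
  have h3 : ‖q‖ * ‖q‖ ^ t = 1 := by
    have := congrArg (‖·‖) h2
    simpa using this
  nlinarith [norm_nonneg q, pow_le_one₀ (norm_nonneg q) hq1.le (n := t),
    pow_nonneg (norm_nonneg q) t]

include hq1 in
lemma qPoch_ne (n : ℕ) : qPoch q q n ≠ 0 := by
  rw [qPoch]
  exact Finset.prod_ne_zero_iff.mpr fun t _ => one_sub_ne hq1 t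

lemma qPoch_succ (a : ℂ) (n : ℕ) : qPoch a q (n + 1) = qPoch a q n * (1 - a * q ^ n) :=
  Finset.prod_range_succ _ n

lemma qPoch_succ' (a : ℂ) (n : ℕ) :
    qPoch a q (n + 1) = (1 - a) * qPoch (a * q) q n := by
  rw [qPoch, Finset.prod_range_succ', qPoch, mul_comm]
  congr 1
  · simp
  · exact Finset.prod_congr rfl fun t _ => by ring

lemma qPoch_zero (a : ℂ) : qPoch a q 0 = 1 := by simp [qPoch]

lemma gbin_neg {N : ℕ} {k : ℤ} (hk : k < 0) : gbin q N k = 0 := if_neg (by omega)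

lemma gbin_gt {N : ℕ} {k : ℤ} (hk : (N : ℤ) < k) : gbin q N k = 0 := if_neg (by omega)

include hq1 in
lemma gbin_zero (N : ℕ) : gbin q N 0 = 1 := by
  rw [gbin, if_pos ⟨le_rfl, by exact_mod_cast Nat.zero_le N⟩]
  simp only [Int.toNat_zero, qPoch_zero, Nat.sub_zero, one_mul]
  exact div_self (qPoch_ne hq1 N)

include hq1 in
lemma gbin_self (N : ℕ) : gbin q N N = 1 := by
  rw [gbin, if_pos ⟨by exact_mod_cast Nat.zero_le N, le_rfl⟩]
  simp only [Int.toNat_natCast, Nat.sub_self, qPoch_zero, mul_one]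
  exact div_self (qPoch_ne hq1 N)

include hq1 in
lemma gbin_pascal1 (N : ℕ) (k : ℤ) :
    gbin q (N + 1) k = gbin q N k + q ^ ((N : ℤ) + 1 - k) * gbin q N (k - 1) := by
  rcases lt_or_ge k 0 with hk | hk
  · rw [gbin_neg hk, gbin_neg hk, gbin_neg (by omega), mul_zero, add_zero]
  rcases lt_or_ge ((N : ℤ) + 1) k with hk2 | hk2
  · rw [gbin_gt (by exact_mod_cast hk2), gbin_gt (by omega), gbin_gt (by omega),
      mul_zero, add_zero]
  lift k to ℕ using hk with m
  have hm : m ≤ N + 1 := by exact_mod_cast hk2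
  rcases Nat.eq_zero_or_pos m with rfl | hm1
  · rw [Nat.cast_zero, gbin_zero hq1, gbin_zero hq1, gbin_neg (by omega), mul_zero, add_zero]
  rcases eq_or_lt_of_le hm with rfl | hm2
  · rw [gbin_self hq1, gbin_gt (by exact_mod_cast Nat.lt_succ_self N),
      show ((N : ℤ) + 1 - (N + 1 : ℕ)) = 0 by push_cast; ring, zpow_zero, one_mul,
      show ((N + 1 : ℕ) : ℤ) - 1 = (N : ℤ) by push_cast; ring, gbin_self hq1, zero_add]
  -- main case : 1 ≤ m ≤ N
  obtain ⟨s, rfl⟩ : ∃ s, m = s + 1 := ⟨m - 1, by omega⟩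
  obtain ⟨r, rfl⟩ : ∃ r, N = (s + 1) + r := ⟨N - (s + 1), by omega⟩
  rw [gbin, if_pos ⟨by positivity, by push_cast; omega⟩,
    gbin, if_pos ⟨by positivity, by push_cast; omega⟩,
    gbin, if_pos ⟨by omega, by push_cast; omega⟩]
  rw [show ((s + 1 + r : ℕ) : ℤ) + 1 - ((s + 1 : ℕ) : ℤ) = ((r + 1 : ℕ) : ℤ) by
    push_cast; ring, zpow_natCast]
  rw [show (((s + 1 : ℕ) : ℤ) - 1) = ((s : ℕ) : ℤ) by push_cast; ring]
  simp only [Int.toNat_natCast]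
  rw [show (s + 1 + r + 1) - (s + 1) = r + 1 by omega,
    show (s + 1 + r) - (s + 1) = r by omega,
    show (s + 1 + r) - s = r + 1 by omega]
  rw [show s + 1 + r + 1 = (s + 1 + r) + 1 by omega, qPoch_succ,
    show s + 1 + r = (s + r) + 1 by omega, qPoch_succ,
    qPoch_succ (a := q) (n := s), qPoch_succ (a := q) (n := r)]
  have h1 := qPoch_ne hq1 (q := q) s
  have h2 := qPoch_ne hq1 (q := q) r
  have h3 := qPoch_ne hq1 (q := q) (s + r)
  have h4 := one_sub_ne hq1 (q := q) s
  have h5 := one_sub_ne hq1 (q := q) r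
  field_simp
  ring

include hq1 in
lemma gbin_pascal2 (N : ℕ) (k : ℤ) :
    gbin q (N + 1) k = q ^ k * gbin q N k + gbin q N (k - 1) := by
  rcases lt_or_ge k 0 with hk | hk
  · rw [gbin_neg hk, gbin_neg hk, gbin_neg (by omega), mul_zero, zero_add]
  rcases lt_or_ge ((N : ℤ) + 1) k with hk2 | hk2
  · rw [gbin_gt (by exact_mod_cast hk2), gbin_gt (by omega), gbin_gt (by omega),
      mul_zero, add_zero]
  lift k to ℕ using hk with m
  have hm : m ≤ N + 1 := by exact_mod_cast hk2
  rcases Nat.eq_zero_or_pos m with rfl | hm1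
  · rw [Nat.cast_zero, gbin_zero hq1, gbin_zero hq1, gbin_neg (by omega), zpow_zero,
      one_mul, add_zero]
  rcases eq_or_lt_of_le hm with rfl | hm2
  · rw [gbin_self hq1, gbin_gt (by exact_mod_cast Nat.lt_succ_self N),
      show ((N + 1 : ℕ) : ℤ) - 1 = (N : ℤ) by push_cast; ring, gbin_self hq1]
    ring
  obtain ⟨s, rfl⟩ : ∃ s, m = s + 1 := ⟨m - 1, by omega⟩
  obtain ⟨r, rfl⟩ : ∃ r, N = (s + 1) + r := ⟨N - (s + 1), by omega⟩
  rw [gbin, if_pos ⟨by positivity, by push_cast; omega⟩,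
    gbin, if_pos ⟨by positivity, by push_cast; omega⟩,
    gbin, if_pos ⟨by omega, by push_cast; omega⟩]
  rw [zpow_natCast]
  rw [show (((s + 1 : ℕ) : ℤ) - 1) = ((s : ℕ) : ℤ) by push_cast; ring]
  simp only [Int.toNat_natCast]
  rw [show (s + 1 + r + 1) - (s + 1) = r + 1 by omega,
    show (s + 1 + r) - (s + 1) = r by omega,
    show (s + 1 + r) - s = r + 1 by omega]
  rw [show s + 1 + r + 1 = (s + 1 + r) + 1 by omega, qPoch_succ,
    show s + 1 + r = (s + r) + 1 by omega, qPoch_succ,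
    qPoch_succ (a := q) (n := s), qPoch_succ (a := q) (n := r)]
  have h1 := qPoch_ne hq1 (q := q) s
  have h2 := qPoch_ne hq1 (q := q) r
  have h3 := qPoch_ne hq1 (q := q) (s + r)
  have h4 := one_sub_ne hq1 (q := q) s
  have h5 := one_sub_ne hq1 (q := q) r
  field_simp
  ring

lemma gbin_symm (N : ℕ) (k : ℤ) : gbin q N k = gbin q N ((N : ℤ) - k) := by
  rcases lt_or_ge k 0 with hk | hk
  · rw [gbin_neg hk, gbin_gt (by omega)]
  rcases lt_or_ge ((N : ℤ)) k with hk2 | hk2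
  · rw [gbin_gt hk2, gbin_neg (by omega)]
  lift k to ℕ using hk with m
  have hm : m ≤ N := by exact_mod_cast hk2
  rw [gbin, if_pos ⟨by positivity, by exact_mod_cast hk2⟩,
    gbin, if_pos ⟨by omega, by omega⟩]
  rw [show ((N : ℤ) - (m : ℕ)) = ((N - m : ℕ) : ℤ) by push_cast [hm]; ring]
  simp only [Int.toNat_natCast]
  rw [show N - (N - m) = m by omega, mul_comm]

-- helper for merging powers
lemma qp {q : ℂ} (hq : q ≠ 0) {e f g : ℤ} (h : e + f = g) : q ^ e * q ^ f = q ^ g := by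
  rw [← h, zpow_add₀ hq]

lemma cc_3m (m : ℤ) : cc q (3 * m) = q ^ (3 * m ^ 2 - 2 * m) := by
  rw [cc, if_pos (by omega)]
  congr 1
  rw [show (3 * m) ^ 2 - 2 * (3 * m) = 3 * (3 * m ^ 2 - 2 * m) by ring,
    Int.mul_ediv_cancel_left _ (by norm_num)]

lemma cc_3m1 (m : ℤ) : cc q (3 * m + 1) = 0 := by
  rw [cc, if_neg (by omega), if_neg (by omega)]

lemma cc_3m2 (m : ℤ) : cc q (3 * m + 2) = -q ^ (3 * m ^ 2 + 2 * m) := by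
  rw [cc, if_neg (by omega), if_pos (by omega)]
  congr 2
  rw [show (3 * m + 2) ^ 2 - 2 * (3 * m + 2) = 3 * (3 * m ^ 2 + 2 * m) by ring,
    Int.mul_ediv_cancel_left _ (by norm_num)]

variable (hq : q ≠ 0)

include hq in
lemma cc_shift3 (j : ℤ) : cc q (j + 3) = q ^ (2 * j + 1) * cc q j := by
  have h3 : j % 3 = 0 ∨ j % 3 = 1 ∨ j % 3 = 2 := by omega
  rcases h3 with h | h | h
  · obtain ⟨m, rfl⟩ : ∃ m, j = 3 * m := ⟨j / 3, by omega⟩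
    rw [show 3 * m + 3 = 3 * (m + 1) by ring, cc_3m, cc_3m,
      qp hq (g := 3 * (m + 1) ^ 2 - 2 * (m + 1)) (by ring)]
  · obtain ⟨m, rfl⟩ : ∃ m, j = 3 * m + 1 := ⟨j / 3, by omega⟩
    rw [show 3 * m + 1 + 3 = 3 * (m + 1) + 1 by ring, cc_3m1, cc_3m1, mul_zero]
  · obtain ⟨m, rfl⟩ : ∃ m, j = 3 * m + 2 := ⟨j / 3, by omega⟩
    rw [show 3 * m + 2 + 3 = 3 * (m + 1) + 2 by ring, cc_3m2, cc_3m2, mul_neg,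
      qp hq (g := 3 * (m + 1) ^ 2 + 2 * (m + 1)) (by ring)]

include hq in
lemma cc_neg (j : ℤ) : cc q (-1 - j) = -(q ^ (2 * j + 1) * cc q j) := by
  have h3 : j % 3 = 0 ∨ j % 3 = 1 ∨ j % 3 = 2 := by omega
  rcases h3 with h | h | h
  · obtain ⟨m, rfl⟩ : ∃ m, j = 3 * m := ⟨j / 3, by omega⟩
    rw [show -1 - 3 * m = 3 * (-m - 1) + 2 by ring, cc_3m2, cc_3m,
      qp hq (g := 3 * (-m - 1) ^ 2 + 2 * (-m - 1)) (by ring)]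
  · obtain ⟨m, rfl⟩ : ∃ m, j = 3 * m + 1 := ⟨j / 3, by omega⟩
    rw [show -1 - (3 * m + 1) = 3 * (-m - 1) + 1 by ring, cc_3m1, cc_3m1, mul_zero, neg_zero]
  · obtain ⟨m, rfl⟩ : ∃ m, j = 3 * m + 2 := ⟨j / 3, by omega⟩
    rw [show -1 - (3 * m + 2) = 3 * (-m - 1) by ring, cc_3m, cc_3m2, mul_neg, neg_neg,
      qp hq (g := 3 * (-m - 1) ^ 2 - 2 * (-m - 1)) (by ring)]

lemma TT_window (N : ℕ) (h a b : ℤ) {A B : ℤ} (hA : A ≤ h - N) (hB : h ≤ B) :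
    ∑ j ∈ Finset.Icc A B, cc q (j + a) * q ^ (b * j) * gbin q N (h - j) = TT q N h a b := by
  rw [TT]
  symm
  apply Finset.sum_subset (Finset.Icc_subset_Icc hA hB)
  intro x hx hnx
  simp only [Finset.mem_Icc] at hx hnx
  have : (N : ℤ) < h - x ∨ h - x < 0 := by omega
  rcases this with h' | h'
  · rw [gbin_gt h', mul_zero]
  · rw [gbin_neg h', mul_zero]

include hq in
lemma TT_shift (N : ℕ) (h a b s : ℤ) :
    TT q N h a b = q ^ (b * s) * TT q N (h - s) (a + s) b := by
  rw [TT, TT, Finset.mul_sum]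
  rw [show Finset.Icc (h - (N : ℤ)) h
      = Finset.map (addRightEmbedding s) (Finset.Icc (h - s - N) (h - s)) by
    rw [Finset.map_add_right_Icc]; congr 1 <;> ring]
  rw [Finset.sum_map]
  refine Finset.sum_congr rfl fun j hj => ?_
  simp only [addRightEmbedding_apply]
  rw [show j + s + a = j + (a + s) by ring, show h - (j + s) = h - s - j by ring,
    show (q : ℂ) ^ (b * (j + s)) = q ^ (b * s) * q ^ (b * j) from (qp hq (by ring)).symm]
  ring

include hq in
lemma TT_shift3 (N : ℕ) (h a b : ℤ) :
    TT q N h (a + 3) b = q ^ (2 * a + 1) * TT q N h a (b + 2) := by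
  rw [TT, TT, Finset.mul_sum]
  refine Finset.sum_congr rfl fun j hj => ?_
  rw [show j + (a + 3) = (j + a) + 3 by ring, cc_shift3 hq,
    show (q : ℂ) ^ ((b + 2) * j) = q ^ (2 * j) * q ^ (b * j) from (qp hq (by ring)).symm,
    show (q : ℂ) ^ (2 * (j + a) + 1) = q ^ (2 * a + 1) * q ^ (2 * j) from
      (qp hq (by ring)).symm]
  ring

include hq hq1 in
lemma TT_pascal1 (N : ℕ) (h a b : ℤ) :
    TT q (N + 1) h a b = TT q N h a b + q ^ ((N : ℤ) + 1 - h) * TT q N (h - 1) a (b + 1) := by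
  rw [TT, Nat.cast_add, Nat.cast_one]
  have e1 : ∀ j ∈ Finset.Icc (h - ((N : ℕ) + 1 : ℤ)) h,
      cc q (j + a) * q ^ (b * j) * gbin q (N + 1) (h - j)
      = cc q (j + a) * q ^ (b * j) * gbin q N (h - j)
        + q ^ ((N : ℤ) + 1 - h) * (cc q (j + a) * q ^ ((b + 1) * j) * gbin q N (h - 1 - j)) := by
    intro j hj
    rw [gbin_pascal1 hq1, show h - 1 - j = h - j - 1 by ring]
    rw [show (q : ℂ) ^ ((N : ℤ) + 1 - (h - j)) = q ^ ((N : ℤ) + 1 - h) * q ^ (1 * j) from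
      (qp hq (by ring)).symm,
      show (q : ℂ) ^ ((b + 1) * j) = q ^ (b * j) * q ^ (1 * j) from (qp hq (by ring)).symm]
    ring
  rw [Finset.sum_congr rfl e1, Finset.sum_add_distrib, ← Finset.mul_sum]
  rw [TT_window (A := h - ((N : ℤ) + 1)) (B := h) (hA := by omega) (hB := le_refl h),
    TT_window (A := h - ((N : ℤ) + 1)) (B := h) (hA := by omega) (hB := by omega)]

include hq hq1 in
lemma TT_pascal2 (N : ℕ) (h a b : ℤ) :
    TT q (N + 1) h a b = q ^ h * TT q N h a (b - 1) + TT q N (h - 1) a b := by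
  rw [TT, Nat.cast_add, Nat.cast_one]
  have e1 : ∀ j ∈ Finset.Icc (h - ((N : ℤ) + 1)) h,
      cc q (j + a) * q ^ (b * j) * gbin q (N + 1) (h - j)
      = q ^ h * (cc q (j + a) * q ^ ((b - 1) * j) * gbin q N (h - j))
        + cc q (j + a) * q ^ (b * j) * gbin q N (h - 1 - j) := by
    intro j hj
    rw [gbin_pascal2 hq1, show h - 1 - j = h - j - 1 by ring]
    rw [show (q : ℂ) ^ ((b - 1) * j) = q ^ (b * j) * q ^ (-j) from
        (qp hq (e := b * j) (f := -j) (by ring)).symm,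
      show (q : ℂ) ^ (h - j) = q ^ (-j) * q ^ h from
        (qp hq (e := -j) (f := h) (by ring)).symm]
    ring
  rw [Finset.sum_congr rfl e1, Finset.sum_add_distrib, ← Finset.mul_sum]
  rw [TT_window (A := h - ((N : ℤ) + 1)) (B := h) (hA := by omega) (hB := le_refl h),
    TT_window (A := h - ((N : ℤ) + 1)) (B := h) (hA := by omega) (hB := by omega)]

include hq in
lemma TT_shift_inv (N : ℕ) (h a b : ℤ) :
    TT q N (h - 1) a b = q ^ (-b) * TT q N h (a - 1) b := by
  have h1 := TT_shift hq N h (a - 1) b 1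
  rw [show a - 1 + 1 = a by ring] at h1
  rw [h1, ← mul_assoc, qp hq (g := 0) (by ring), zpow_zero, one_mul]

include hq in
lemma TT_shift_dec (N : ℕ) (h a b : ℤ) :
    TT q N (h + 1) a b = q ^ b * TT q N h (a + 1) b := by
  have h1 := TT_shift hq N (h + 1) a b 1
  rw [show h + 1 - 1 = h by ring] at h1
  rw [h1, mul_one]

def EvenPack (q : ℂ) (n : ℕ) : Prop :=
  TT q (2 * n) (n : ℤ) 0 0 = q ^ ((n : ℤ) ^ 2 - n) ∧
  TT q (2 * n) (n : ℤ) 0 1 = q ^ ((n : ℤ) ^ 2) ∧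
  TT q (2 * n) (n : ℤ) 1 0 = 0 ∧
  TT q (2 * n) (n : ℤ) 2 0 = -q ^ ((n : ℤ) ^ 2 - n) ∧
  TT q (2 * n) (n : ℤ) 2 (-1) = -q ^ ((n : ℤ) ^ 2) ∧
  TT q (2 * n) (n : ℤ) (-1) 1 = -q ^ ((n : ℤ) ^ 2 + 1)

def OddPack (q : ℂ) (n : ℕ) : Prop :=
  TT q (2 * n + 1) (n : ℤ) 0 0 = q ^ ((n : ℤ) ^ 2 - n) - q ^ ((n : ℤ) ^ 2 + n + 1) ∧
  TT q (2 * n + 1) (n : ℤ) 0 1 = 0 ∧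
  TT q (2 * n + 1) (n : ℤ) 1 0 = q ^ ((n : ℤ) ^ 2 + n) ∧
  TT q (2 * n + 1) (n : ℤ) 2 0 = -q ^ ((n : ℤ) ^ 2 + n) ∧
  TT q (2 * n + 1) (n : ℤ) 2 (-1) = -q ^ ((n : ℤ) ^ 2) ∧
  TT q (2 * n + 1) (n : ℤ) (-1) 1 = -q ^ ((n : ℤ) ^ 2 + 1)

include hq hq1 in
lemma step_odd (n : ℕ) (hE : EvenPack q n) : OddPack q n := by
  obtain ⟨E1, E2, E3, E4, E5, E6⟩ := hE
  have hne : ∀ e : ℤ, (q : ℂ) ^ e ≠ 0 := fun e => zpow_ne_zero e hq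
  have S1 : TT q (2 * n) ((n : ℤ) - 1) 0 1 = -q ^ ((n : ℤ) ^ 2) := by
    rw [TT_shift_inv hq, show (0 : ℤ) - 1 = -1 by ring, E6, mul_neg,
      qp hq (g := (n : ℤ) ^ 2) (by ring)]
  have S2 : TT q (2 * n) ((n : ℤ) - 1) 1 1 = q ^ ((n : ℤ) ^ 2 - 1) := by
    rw [TT_shift_inv hq, show (1 : ℤ) - 1 = 0 by ring, E2,
      qp hq (g := (n : ℤ) ^ 2 - 1) (by ring)]
  have S3 : TT q (2 * n) ((n : ℤ) - 1) 2 0 = 0 := by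
    rw [TT_shift_inv hq, show (2 : ℤ) - 1 = 1 by ring, E3, mul_zero]
  have S4 : TT q (2 * n) (n : ℤ) (-2) 2 = 0 := by
    have h1 := TT_shift3 hq (2 * n) (n : ℤ) (-2) 0
    rw [show (-2 : ℤ) + 3 = 1 by norm_num, show (0 : ℤ) + 2 = 2 by norm_num, E3] at h1
    exact ((mul_eq_zero.mp h1.symm).resolve_left (hne _))
  have S5 : TT q (2 * n) ((n : ℤ) - 1) (-1) 2 = 0 := by
    rw [TT_shift_inv hq, show (-1 : ℤ) - 1 = -2 by ring, S4, mul_zero]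
  have hexp : ((2 * n : ℕ) : ℤ) + 1 - (n : ℤ) = (n : ℤ) + 1 := by push_cast; ring
  refine ⟨?_, ?_, ?_, ?_, ?_, ?_⟩
  · rw [TT_pascal1 hq1 hq, hexp, show (0 : ℤ) + 1 = 1 by norm_num, E1, S1, mul_neg,
      qp hq (g := (n : ℤ) ^ 2 + n + 1) (by ring)]
    ring
  · rw [TT_pascal2 hq1 hq, show (1 : ℤ) - 1 = 0 by norm_num, E1, S1,
      qp hq (g := (n : ℤ) ^ 2) (by ring)]
    ring
  · rw [TT_pascal1 hq1 hq, hexp, show (0 : ℤ) + 1 = 1 by norm_num, E3, S2,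
      qp hq (g := (n : ℤ) ^ 2 + n) (by ring)]
    ring
  · rw [TT_pascal2 hq1 hq, show (0 : ℤ) - 1 = -1 by norm_num, E5, S3, add_zero, mul_neg,
      qp hq (g := (n : ℤ) ^ 2 + n) (by ring)]
  · rw [TT_pascal1 hq1 hq, hexp, show (-1 : ℤ) + 1 = 0 by norm_num, E5, S3, mul_zero,
      add_zero]
  · rw [TT_pascal1 hq1 hq, hexp, show (1 : ℤ) + 1 = 2 by norm_num, E6, S5, mul_zero,
      add_zero]

include hq hq1 in
lemma step_even (n : ℕ) (hO : OddPack q n) : EvenPack q (n + 1) := by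
  obtain ⟨O1, O2, O3, O4, O5, O6⟩ := hO
  have hne : ∀ e : ℤ, (q : ℂ) ^ e ≠ 0 := fun e => zpow_ne_zero e hq
  have U1 : TT q (2 * n + 1) ((n : ℤ) + 1) 0 0 = q ^ ((n : ℤ) ^ 2 + n) := by
    rw [TT_shift_dec hq, show (0 : ℤ) + 1 = 1 by norm_num, O3, zpow_zero, one_mul]
  have V3 : TT q (2 * n + 1) (n : ℤ) 3 (-1) = 0 := by
    have h1 := TT_shift3 hq (2 * n + 1) (n : ℤ) 0 (-1)
    rw [show (0 : ℤ) + 3 = 3 by norm_num, show (-1 : ℤ) + 2 = 1 by norm_num, O2,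
      mul_zero] at h1
    exact h1
  have U2 : TT q (2 * n + 1) ((n : ℤ) + 1) 2 (-1) = 0 := by
    rw [TT_shift_dec hq, show (2 : ℤ) + 1 = 3 by norm_num, V3, mul_zero]
  have U3 : TT q (2 * n + 1) ((n : ℤ) + 1) 1 (-1) = -q ^ ((n : ℤ) ^ 2 - 1) := by
    rw [TT_shift_dec hq, show (1 : ℤ) + 1 = 2 by norm_num, O5, mul_neg,
      qp hq (g := (n : ℤ) ^ 2 - 1) (by ring)]
  have U5 : TT q (2 * n + 1) ((n : ℤ) + 1) (-1) 1 = 0 := by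
    rw [TT_shift_dec hq, show (-1 : ℤ) + 1 = 0 by norm_num, O2, mul_zero]
  have V6 : TT q (2 * n + 1) (n : ℤ) (-1) 2 = -q ^ ((n : ℤ) ^ 2 + n + 1) := by
    have h1 := TT_shift3 hq (2 * n + 1) (n : ℤ) (-1) 0
    rw [show (-1 : ℤ) + 3 = 2 by norm_num, show (0 : ℤ) + 2 = 2 by norm_num, O4] at h1
    have h2 : (q : ℂ) ^ (2 * (-1 : ℤ) + 1) * (-q ^ ((n : ℤ) ^ 2 + n + 1))
        = q ^ (2 * (-1 : ℤ) + 1) * TT q (2 * n + 1) (n : ℤ) (-1) 2 := by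
      rw [← h1, mul_neg, mul_neg, qp hq (g := (n : ℤ) ^ 2 + n) (by ring)]
    exact (mul_left_cancel₀ (hne _) h2).symm
  have hexp : ((2 * n + 1 : ℕ) : ℤ) + 1 - ((n : ℤ) + 1) = (n : ℤ) + 1 := by push_cast; ring
  have hh : (n : ℤ) + 1 - 1 = (n : ℤ) := by ring
  have hN : 2 * (n + 1) = (2 * n + 1) + 1 := by ring
  rw [EvenPack]
  push_cast
  rw [hN]
  refine ⟨?_, ?_, ?_, ?_, ?_, ?_⟩
  · rw [TT_pascal1 hq1 hq, hexp, hh, show (0 : ℤ) + 1 = 1 by norm_num, U1, O2, mul_zero,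
      add_zero]
    congr 1
    ring
  · rw [TT_pascal2 hq1 hq, hh, show (1 : ℤ) - 1 = 0 by norm_num, U1, O2, add_zero,
      qp hq (g := ((n : ℤ) + 1) ^ 2) (by ring)]
  · rw [TT_pascal2 hq1 hq, hh, show (0 : ℤ) - 1 = -1 by norm_num, U3, O3, mul_neg,
      qp hq (g := (n : ℤ) ^ 2 + n) (by ring)]
    ring
  · rw [TT_pascal2 hq1 hq, hh, show (0 : ℤ) - 1 = -1 by norm_num, U2, O4, mul_zero,
      zero_add]
    congr 2
    ring
  · rw [TT_pascal1 hq1 hq, hexp, hh, show (-1 : ℤ) + 1 = 0 by norm_num, U2, O4, zero_add,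
      mul_neg, qp hq (g := ((n : ℤ) + 1) ^ 2) (by ring)]
  · rw [TT_pascal1 hq1 hq, hexp, hh, show (1 : ℤ) + 1 = 2 by norm_num, U5, V6, zero_add,
      mul_neg, qp hq (g := ((n : ℤ) + 1) ^ 2 + 1) (by ring)]

include hq1 in
lemma TT_base (a b : ℤ) : TT q 0 0 a b = cc q a := by
  rw [TT]
  norm_num
  rw [gbin_zero hq1, mul_one]

include hq1 in
lemma base_even : EvenPack q 0 := by
  refine ⟨?_, ?_, ?_, ?_, ?_, ?_⟩ <;>
    · simp only [Nat.mul_zero, mul_zero, Nat.cast_zero, TT_base hq1]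
      norm_num [cc]

include hq1 hq in
lemma packs (n : ℕ) : EvenPack q n ∧ OddPack q n := by
  induction n with
  | zero =>
    exact ⟨base_even hq1, step_odd hq1 hq 0 (base_even hq1)⟩
  | succ n ih =>
    have hE := step_even hq1 hq n ih.2
    exact ⟨hE, step_odd hq1 hq (n + 1) hE⟩

lemma cnat (t : ℕ) :
    (if t % 3 = 0 then q ^ ((t ^ 2 - 2 * t) / 3)
      else if t % 3 = 2 then -q ^ ((t ^ 2 - 2 * t) / 3) else 0) = cc q (t : ℤ) := by
  have h3 : t % 3 = 0 ∨ t % 3 = 1 ∨ t % 3 = 2 := by omega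
  rcases h3 with h | h | h
  · obtain ⟨m, rfl⟩ : ∃ m, t = 3 * m := ⟨t / 3, by omega⟩
    rw [if_pos h, show ((3 * m : ℕ) : ℤ) = 3 * (m : ℤ) by push_cast; ring, cc_3m]
    have h2 : ((3 * m) ^ 2 - 2 * (3 * m)) / 3 = 3 * m ^ 2 - 2 * m := by
      rw [show (3 * m) ^ 2 = 9 * m ^ 2 by ring, show 2 * (3 * m) = 6 * m by ring]
      generalize m ^ 2 = a
      omega
    rw [h2, ← zpow_natCast]
    congr 1
    rw [Nat.cast_sub (show 2 * m ≤ 3 * m ^ 2 by nlinarith)]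
    push_cast
    ring
  · obtain ⟨m, rfl⟩ : ∃ m, t = 3 * m + 1 := ⟨t / 3, by omega⟩
    rw [if_neg (by omega), if_neg (by omega),
      show ((3 * m + 1 : ℕ) : ℤ) = 3 * (m : ℤ) + 1 by push_cast; ring, cc_3m1]
  · obtain ⟨m, rfl⟩ : ∃ m, t = 3 * m + 2 := ⟨t / 3, by omega⟩
    rw [if_neg (by omega), if_pos (by omega),
      show ((3 * m + 2 : ℕ) : ℤ) = 3 * (m : ℤ) + 2 by push_cast; ring, cc_3m2]
    have h2 : ((3 * m + 2) ^ 2 - 2 * (3 * m + 2)) / 3 = 3 * m ^ 2 + 2 * m := by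
      rw [show (3 * m + 2) ^ 2 = 9 * m ^ 2 + 12 * m + 4 by ring,
        show 2 * (3 * m + 2) = 6 * m + 4 by ring]
      generalize m ^ 2 = a
      omega
    rw [h2, ← zpow_natCast,
      show ((3 * m ^ 2 + 2 * m : ℕ) : ℤ) = 3 * (m : ℤ) ^ 2 + 2 * m by push_cast; ring]

lemma gbin_formula (n t : ℕ) (ht : t ≤ n) :
    gbin q (2 * n + 1) ((n : ℤ) - t)
      = qPoch q q (2 * n + 1) / (qPoch q q (n - t) * qPoch q q (n + t + 1)) := by
  rw [gbin, if_pos ⟨by omega, by push_cast; omega⟩]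
  rw [show (n : ℤ) - t = ((n - t : ℕ) : ℤ) by omega]
  simp only [Int.toNat_natCast]
  rw [show (2 * n + 1) - (n - t) = n + t + 1 by omega]

lemma sum_reindex (n : ℕ) (f : ℤ → ℂ) :
    ∑ j ∈ Finset.Icc (-(n : ℤ) - 1) (n : ℤ), f j
      = ∑ t ∈ Finset.range (n + 1), (f (t : ℤ) + f (-1 - (t : ℤ))) := by
  have hsplit : Finset.Icc (-(n : ℤ) - 1) (n : ℤ)
      = Finset.Icc (-(n : ℤ) - 1) (-1) ∪ Finset.Icc 0 (n : ℤ) := by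
    ext x
    simp only [Finset.mem_Icc, Finset.mem_union]
    omega
  have hdisj : Disjoint (Finset.Icc (-(n : ℤ) - 1) (-1)) (Finset.Icc 0 (n : ℤ)) := by
    rw [Finset.disjoint_left]
    intro x hx hx2
    simp only [Finset.mem_Icc] at hx hx2
    omega
  rw [hsplit, Finset.sum_union hdisj, Finset.sum_add_distrib, add_comm]
  congr 1
  · refine Finset.sum_nbij' (fun j => j.toNat) (fun t => (t : ℤ)) ?_ ?_ ?_ ?_ ?_
    · intro a ha
      simp only [Finset.mem_Icc] at ha
      simp only [Finset.mem_range]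
      omega
    · intro a ha
      simp only [Finset.mem_range] at ha
      simp only [Finset.mem_Icc]
      omega
    · intro a ha
      simp only [Finset.mem_Icc] at ha
      omega
    · intro a ha
      simp only [Int.toNat_natCast]
    · intro a ha
      simp only [Finset.mem_Icc] at ha
      congr 1
      omega
  · refine Finset.sum_nbij' (fun j => (-1 - j).toNat) (fun t => -1 - (t : ℤ)) ?_ ?_ ?_ ?_ ?_
    · intro a ha
      simp only [Finset.mem_Icc] at ha
      simp only [Finset.mem_range]
      omega
    · intro a ha
      simp only [Finset.mem_range] at ha
      simp only [Finset.mem_Icc]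
      omega
    · intro a ha
      simp only [Finset.mem_Icc] at ha
      omega
    · intro a ha
      simp only [Finset.mem_range] at ha
      omega
    · intro a ha
      simp only [Finset.mem_Icc] at ha
      congr 1
      omega

end basic

end BP3

noncomputable def qPochInf (a q : ℂ) : ℂ :=
  ∏' t : ℕ, (1 - a * q ^ t)

def IsBaileyPair (q a : ℂ) (α β : ℕ → ℂ) : Prop :=
  ∀ n : ℕ, β n =
    ∑ t ∈ Finset.range (n + 1), α t / (qPoch q q (n - t) * qPoch (a * q) q (n + t))

open BP3 in
theorem bailey_pair_3 (q : ℂ) (hq0 : 0 < ‖q‖) (hq1 : ‖q‖ < 1) :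
    IsBaileyPair q q
      (fun m => (1 - q ^ (2 * m + 1)) / (1 - q) *
        (if m % 3 = 0 then q ^ ((m ^ 2 - 2 * m) / 3)
          else if m % 3 = 2 then -q ^ ((m ^ 2 - 2 * m) / 3) else 0))
      (fun n => q ^ (n ^ 2 - n) / qPoch q q (2 * n)) := by
  have hq : q ≠ 0 := fun h => by simp [h] at hq0
  intro n
  have h1q : (1 : ℂ) - q ≠ 0 := by simpa using one_sub_ne hq1 0
  have hP : ∀ m, qPoch q q m ≠ 0 := qPoch_ne hq1
  simp only []
  have hterm : ∀ t ∈ Finset.range (n + 1),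
      (1 - q ^ (2 * t + 1)) / (1 - q) *
        (if t % 3 = 0 then q ^ ((t ^ 2 - 2 * t) / 3)
          else if t % 3 = 2 then -q ^ ((t ^ 2 - 2 * t) / 3) else 0) /
        (qPoch q q (n - t) * qPoch (q * q) q (n + t))
      = (cc q (t : ℤ) * gbin q (2 * n + 1) ((n : ℤ) - (t : ℤ))
          + cc q (-1 - (t : ℤ)) * gbin q (2 * n + 1) ((n : ℤ) - (-1 - (t : ℤ))))
          / qPoch q q (2 * n + 1) := by
    intro t ht
    rw [Finset.mem_range] at ht
    have htn : t ≤ n := by omega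
    rw [cnat]
    have hsym : gbin q (2 * n + 1) ((n : ℤ) - (-1 - (t : ℤ)))
        = gbin q (2 * n + 1) ((n : ℤ) - (t : ℤ)) := by
      rw [gbin_symm (q := q) (2 * n + 1) ((n : ℤ) - (-1 - (t : ℤ)))]
      congr 1
      omega
    rw [hsym, cc_neg hq, gbin_formula n t htn]
    have hQ : qPoch (q * q) q (n + t) = qPoch q q (n + t + 1) / (1 - q) := by
      rw [qPoch_succ' (a := q)]
      field_simp
    rw [hQ]
    rw [show (q : ℂ) ^ (2 * t + 1) = q ^ (2 * (t : ℤ) + 1) from by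
      rw [show (2 * (t : ℤ) + 1) = ((2 * t + 1 : ℕ) : ℤ) by push_cast; ring, zpow_natCast]]
    have e1 := hP (n - t)
    have e2 := hP (n + t + 1)
    have e3 := hP (2 * n + 1)
    field_simp
    ring
  rw [Finset.sum_congr rfl hterm, ← Finset.sum_div]
  have hTT : TT q (2 * n + 1) (n : ℤ) 0 0
      = ∑ t ∈ Finset.range (n + 1),
        (cc q (t : ℤ) * gbin q (2 * n + 1) ((n : ℤ) - (t : ℤ))
          + cc q (-1 - (t : ℤ)) * gbin q (2 * n + 1) ((n : ℤ) - (-1 - (t : ℤ)))) := by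
    rw [TT, show (n : ℤ) - ((2 * n + 1 : ℕ) : ℤ) = -(n : ℤ) - 1 by push_cast; ring]
    rw [sum_reindex n (fun j => cc q (j + 0) * q ^ ((0 : ℤ) * j) * gbin q (2 * n + 1) ((n : ℤ) - j))]
    apply Finset.sum_congr rfl
    intro t ht
    simp only [add_zero, zero_mul, zpow_zero, mul_one]
  rw [← hTT, (packs hq1 hq n).2.1]
  rw [show 2 * n + 1 = (2 * n) + 1 from rfl, qPoch_succ]
  have e4 := hP (2 * n)
  have e5 : (1 : ℂ) - q * q ^ (2 * n) ≠ 0 := one_sub_ne hq1 (2 * n)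
  have hfin : (q : ℂ) ^ ((n : ℤ) ^ 2 - n) - q ^ ((n : ℤ) ^ 2 + n + 1)
      = q ^ ((n : ℤ) ^ 2 - n) * (1 - q * q ^ (2 * n)) := by
    rw [mul_one_sub]
    congr 1
    symm
    calc q ^ ((n : ℤ) ^ 2 - n) * (q * q ^ (2 * n))
        = q ^ ((n : ℤ) ^ 2 - n) * (q ^ (1 : ℤ) * q ^ ((2 * n : ℕ) : ℤ)) := by
          rw [zpow_one, zpow_natCast]
      _ = q ^ ((n : ℤ) ^ 2 - n) * q ^ (2 * (n : ℤ) + 1) := by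
          rw [qp hq (g := 2 * (n : ℤ) + 1) (by push_cast; ring)]
      _ = q ^ ((n : ℤ) ^ 2 + n + 1) := qp hq (by ring)
  rw [hfin, mul_comm (qPoch q q (2 * n)) (1 - q * q ^ (2 * n)),
    mul_comm (q ^ ((n : ℤ) ^ 2 - (n : ℤ))) (1 - q * q ^ (2 * n)),
    mul_div_mul_left _ _ e5]
  congr 1
  rw [← zpow_natCast]
  congr 1
  rw [Nat.cast_sub (Nat.le_self_pow (by norm_num) n)]
  push_cast
  ring
end

section
/- Bailey pair #5 (shifted McLaughlin–Sills P1): The sequences β_n = (−1;q³)_n / ((q;q)_{2n} (−1;q)_n) and α_m defined by α_m = ((1 − q^{2m+1})/(1 − q)) · c_m, where c_m = q^{(m²−m)/2} if m ≡ 0 (mod 3), c_m = −q^{(m²−m)/2} if m ≡ 2 (mod 3), and c_m = 0 if m ≡ 1 (mod 3), form a Bailey pair with respect to base a = q. Here β_0 = 1 and for n ≥ 1 one has β_n = (−q³;q³)_{n−1} / ((q;q)_{2n} (−q;q)_{n−1}). -/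
open Finset

section
variable (q : ℂ)
noncomputable def qb : ℕ → ℤ → ℂ
  | 0, k => if k = 0 then 1 else 0
  | (N+1), k => qb N (k-1) + q ^ k * qb N k
noncomputable def eps : ℤ → ℂ := fun t =>
  if t % 3 = 0 then 1 else if t % 3 = 2 then -1 else 0
def Tf (t : ℤ) : ℤ := t * (t - 1) / 2
noncomputable def qT (t : ℤ) : ℂ := q ^ Tf t

lemma qb_pascal (N : ℕ) (k : ℤ) : qb q (N+1) k = qb q N (k-1) + q ^ k * qb q N k := rfl
lemma qb_out (N : ℕ) (k : ℤ) (h : k < 0 ∨ (N:ℤ) < k) : qb q N k = 0 := by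
  induction N generalizing k with
  | zero => simp [qb]; omega
  | succ N ih => rw [qb_pascal, ih (k-1) (by omega), ih k (by omega)]; ring
variable (hq : q ≠ 0)
lemma qb_pascal' (hq : q ≠ 0) (N : ℕ) (k : ℤ) :
    qb q (N+1) k = q ^ ((N:ℤ) + 1 - k) * qb q N (k-1) + qb q N k := by
  induction N generalizing k with
  | zero =>
    simp only [qb]
    rcases eq_or_ne k 0 with rfl | h0
    · norm_num
    rcases eq_or_ne k 1 with rfl | h1
    · norm_num
    · simp [h0, h1, sub_eq_zero, (by omega : k - 1 ≠ 0)]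
  | succ N ih =>
    calc qb q (N+1+1) k = qb q (N+1) (k-1) + q ^ k * qb q (N+1) k := rfl
      _ = (q ^ ((N:ℤ)+1-(k-1)) * qb q N (k-1-1) + qb q N (k-1))
          + q ^ k * (q ^ ((N:ℤ)+1-k) * qb q N (k-1) + qb q N k) := by rw [ih, ih]
      _ = q ^ ((N:ℤ)+1+1-k) * (qb q N (k-1-1) + q ^ (k-1) * qb q N (k-1))
          + (qb q N (k-1) + q ^ k * qb q N k) := by
            have h1 : q ^ ((N:ℤ)+1-(k-1)) = q ^ ((N:ℤ)+1+1-k) := by ring_nf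
            have h2 : q ^ k * q ^ ((N:ℤ)+1-k) = q ^ ((N:ℤ)+1) := by
              rw [← zpow_add₀ hq]; ring_nf
            have h3 : q ^ ((N:ℤ)+1+1-k) * q ^ (k-1) = q ^ ((N:ℤ)+1) := by
              rw [← zpow_add₀ hq]; ring_nf
            rw [h1]; linear_combination qb q N (k-1) * h2 - qb q N (k-1) * h3
      _ = q ^ ((N:ℤ)+1+1-k) * qb q (N+1) (k-1) + qb q (N+1) k := by
            rw [qb_pascal, qb_pascal]
      _ = q ^ (((N+1:ℕ):ℤ)+1-k) * qb q (N+1) (k-1) + qb q (N+1) k := by push_cast; ring_nf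
lemma qb_symm (hq : q ≠ 0) (N : ℕ) (k : ℤ) : qb q N k = qb q N ((N:ℤ) - k) := by
  induction N generalizing k with
  | zero =>
    simp only [qb, Nat.cast_zero, zero_sub]
    by_cases h : k = 0 <;> simp [h, neg_eq_zero]
  | succ N ih =>
    calc qb q (N+1) k = q ^ ((N:ℤ)+1-k) * qb q N (k-1) + qb q N k := qb_pascal' q hq N k
      _ = q ^ ((N:ℤ)+1-k) * qb q N ((N:ℤ)-(k-1)) + qb q N ((N:ℤ)-k) := by rw [← ih, ← ih]
      _ = qb q N (((N:ℤ)+1-k)-1) + q ^ ((N:ℤ)+1-k) * qb q N ((N:ℤ)+1-k) := by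
            have h1 : (N:ℤ)-(k-1) = (N:ℤ)+1-k := by ring
            have h2 : (N:ℤ)-k = (N:ℤ)+1-k-1 := by ring
            rw [h1, h2]; ring
      _ = qb q (N+1) ((N:ℤ)+1-k) := (qb_pascal q N _).symm
      _ = qb q (N+1) (((N+1:ℕ):ℤ)-k) := by push_cast; ring_nf
lemma Tf_add_one (t : ℤ) : Tf (t + 1) = Tf t + t := by
  have : (t+1) * (t + 1 - 1) = t * (t-1) + t * 2 := by ring
  simp only [Tf, this, Int.add_mul_ediv_right _ _ (two_ne_zero)]
lemma Tf_one_sub (t : ℤ) : Tf (1 - t) = Tf t := by unfold Tf; congr 1; ring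
lemma eps_add_three (t : ℤ) : eps (t + 3) = eps t := by
  unfold eps; norm_num [Int.add_mul_emod_self_left]
lemma eps_neg_one_sub (t : ℤ) : eps (-1 - t) = -eps t := by
  unfold eps
  have h0 := Int.emod_nonneg t (by norm_num : (3:ℤ) ≠ 0)
  have h1 := Int.emod_lt_of_pos t (by norm_num : (0:ℤ) < 3)
  have e : (-1 - t) % 3 = (2 - t % 3) % 3 := by omega
  interval_cases ht : t % 3 <;> simp_all

noncomputable def hS (N : ℕ) (m c : ℤ) : ℂ :=
  ∑ t ∈ Icc (m - N) m, eps t * qT q (t + c) * qb q N (m - t)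

lemma sum_shift (f : ℤ → ℂ) (a b d : ℤ) :
    ∑ t ∈ Icc a b, f t = ∑ t ∈ Icc (a+d) (b+d), f (t - d) := by
  rw [← Finset.map_add_right_Icc, Finset.sum_map]; simp

lemma sum_reflect (f : ℤ → ℂ) (a b k : ℤ) :
    ∑ t ∈ Icc a b, f t = ∑ t ∈ Icc (k-b) (k-a), f (k - t) := by
  apply Finset.sum_nbij' (fun t => k - t) (fun t => k - t) <;>
    intros <;> simp_all [Finset.mem_Icc] <;> omega

lemma hS_window (N : ℕ) (m c a b : ℤ) (ha : a ≤ m - N) (hb : m ≤ b) :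
    hS q N m c = ∑ t ∈ Icc a b, eps t * qT q (t + c) * qb q N (m - t) := by
  apply Finset.sum_subset (Finset.Icc_subset_Icc ha hb)
  intro x hx hnx
  simp only [Finset.mem_Icc] at hx hnx
  rw [qb_out q N (m-x) (by omega)]; ring

include hq

lemma zpow_shift (a b : ℤ) : q ^ a * q ^ b = q ^ (a + b) := (zpow_add₀ hq a b).symm

lemma qT_shift (a b : ℤ) : qT q (a + b) = qT q a * q ^ (Tf (a+b) - Tf a) := by
  rw [qT, qT, zpow_shift q hq]; congr 1; ring

lemma hR1 (N : ℕ) (m c : ℤ) :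
    hS q (N+1) m c = hS q N (m-1) c + q ^ (m+c-1) * hS q N m (c-1) := by
  rw [hS_window q N (m-1) c (m-(N+1:ℕ)) m (by push_cast; omega) (by omega),
      hS_window q N m (c-1) (m-(N+1:ℕ)) m (by push_cast; omega) (by omega),
      hS, Finset.mul_sum, ← Finset.sum_add_distrib]
  apply Finset.sum_congr rfl
  intro t _
  rw [qb_pascal]
  have e1 : m - 1 - t = m - t - 1 := by ring
  have e2 : qT q (t+c) * q ^ (m - t) = q ^ (m+c-1) * qT q (t+c-1) := by
    have h3 : Tf (t+c) = Tf (t+c-1) + (t+c-1) := by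
      rw [(by ring : t+c = (t+c-1)+1), Tf_add_one]; ring_nf
    rw [qT, qT, h3, ← zpow_add₀ hq, ← zpow_add₀ hq]; congr 1; ring
  rw [e1]
  calc eps t * qT q (t + c) * (qb q N (m - t - 1) + q ^ (m - t) * qb q N (m - t))
      = eps t * qT q (t+c) * qb q N (m-t-1)
        + eps t * (qT q (t+c) * q ^ (m-t)) * qb q N (m-t) := by ring
    _ = _ := by rw [e2]; ring

lemma hR2 (N : ℕ) (m c : ℤ) :
    hS q (N+1) m c = hS q N m c + q ^ ((N:ℤ)+1-m-c) * hS q N (m-1) (c+1) := by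
  rw [hS_window q N m c (m-(N+1:ℕ)) m (by push_cast; omega) (by omega),
      hS_window q N (m-1) (c+1) (m-(N+1:ℕ)) m (by push_cast; omega) (by omega),
      hS, Finset.mul_sum, ← Finset.sum_add_distrib]
  apply Finset.sum_congr rfl
  intro t _
  rw [qb_pascal' q hq]
  have e1 : m - 1 - t = m - t - 1 := by ring
  have e2 : qT q (t+c) * q ^ ((N:ℤ)+1-(m-t)) = q ^ ((N:ℤ)+1-m-c) * qT q (t+c+1) := by
    have h3 : Tf (t+c+1) = Tf (t+c) + (t+c) := Tf_add_one (t+c)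
    rw [qT, qT, h3, ← zpow_add₀ hq, ← zpow_add₀ hq]; congr 1; ring
  rw [e1]
  calc eps t * qT q (t + c) * (q ^ ((N:ℤ)+1-(m-t)) * qb q N (m - t - 1) + qb q N (m - t))
      = eps t * (qT q (t+c) * q ^ ((N:ℤ)+1-(m-t))) * qb q N (m-t-1)
        + eps t * qT q (t+c) * qb q N (m-t) := by ring
    _ = _ := by rw [e2]; ring

lemma hR3 (N : ℕ) (m c : ℤ) : hS q N (m+3) c = hS q N m (c+3) := by
  rw [hS, hS, sum_shift _ (m - N) m 3]
  have : m - (N:ℤ) + 3 = m + 3 - N := by ring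
  rw [this]
  apply Finset.sum_congr rfl
  intro t _
  have h1 : eps (t - 3) = eps t := by rw [← eps_add_three (t-3)]; ring_nf
  have h2 : t - 3 + (c + 3) = t + c := by ring
  have h3 : m - (t - 3) = m + 3 - t := by ring
  rw [h2, h3, h1]

lemma hR4 (N : ℕ) (m c : ℤ) : hS q N m c = -hS q N ((N:ℤ)-m-1) (2-c) := by
  have key : hS q N ((N:ℤ)-m-1) (2-c)
      = ∑ t ∈ Icc (m - N) m, -(eps t * qT q (t + c) * qb q N (m - t)) := by
    rw [hS, sum_reflect _ ((N:ℤ)-m-1-N) ((N:ℤ)-m-1) (-1)]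
    have e1 : -1 - ((N:ℤ)-m-1) = m - N := by ring
    have e2 : -1 - ((N:ℤ)-m-1-N) = m := by ring
    rw [e1, e2]
    apply Finset.sum_congr rfl
    intro t _
    have p1 : eps (-1 - t) = -eps t := eps_neg_one_sub t
    have p2 : qT q (-1 - t + (2 - c)) = qT q (t + c) := by
      rw [(by ring : -1 - t + (2-c) = 1 - (t+c)), qT, Tf_one_sub, qT]
    have p3 : qb q N ((N:ℤ)-m-1 - (-1-t)) = qb q N (m - t) := by
      rw [(by ring : (N:ℤ)-m-1-(-1-t) = (N:ℤ)-(m-t)), ← qb_symm q hq]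
    rw [p1, p2, p3]; ring
  rw [key, Finset.sum_neg_distrib, neg_neg, hS]

noncomputable def P (n : ℕ) : ℂ := ∏ j ∈ Finset.range n, (1 - q^j + q^(2*j))

lemma P_succ (n : ℕ) : P q (n+1) = P q n * (1 - q^n + q^(2*n)) := Finset.prod_range_succ _ n

lemma Zzero (n : ℕ) : hS q (2*n+1) (n:ℤ) 1 = 0 := by
  have h := hR4 q hq (2*n+1) n 1
  rw [(by push_cast; ring : ((2*n+1:ℕ):ℤ) - n - 1 = (n:ℤ)),
      (by norm_num : (2:ℤ) - 1 = 1)] at h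
  linear_combination h / 2

lemma negF (n : ℕ) : hS q (2*n) ((n:ℤ)-1) 1 = -hS q (2*n) (n:ℤ) 1 := by
  have h := hR4 q hq (2*n) ((n:ℤ)-1) 1
  rw [(by push_cast; ring : ((2*n:ℕ):ℤ) - ((n:ℤ)-1) - 1 = (n:ℤ)),
      (by norm_num : (2:ℤ) - 1 = 1)] at h
  exact h

lemma negB (n : ℕ) : hS q (2*n) ((n:ℤ)-2) 2 = -hS q (2*n) ((n:ℤ)+1) 0 := by
  have h := hR4 q hq (2*n) ((n:ℤ)+1) 0
  rw [(by push_cast; ring : ((2*n:ℕ):ℤ) - ((n:ℤ)+1) - 1 = (n:ℤ)-2),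
      (by norm_num : (2:ℤ) - 0 = 2)] at h
  linear_combination h

lemma Arel (n : ℕ) : hS q (2*n+1) ((n:ℤ)+1) 0
    = hS q (2*n) ((n:ℤ)+1) 0 + q ^ (n:ℤ) * hS q (2*n) (n:ℤ) 1 := by
  have h := hR2 q hq (2*n) ((n:ℤ)+1) 0
  rw [(by push_cast; ring : ((2*n:ℕ):ℤ) + 1 - ((n:ℤ)+1) - 0 = (n:ℤ)),
      (by ring : (n:ℤ) + 1 - 1 = (n:ℤ)), (by ring : (0:ℤ) + 1 = 1)] at h
  exact h

lemma Wrel (n : ℕ) : hS q (2*n+1) ((n:ℤ)-1) 2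
    = -hS q (2*n) ((n:ℤ)+1) 0 - q ^ (n:ℤ) * hS q (2*n) (n:ℤ) 1 := by
  have h := hR1 q hq (2*n) ((n:ℤ)-1) 2
  rw [(by ring : (n:ℤ) - 1 + 2 - 1 = (n:ℤ)), (by ring : (n:ℤ)-1-1 = (n:ℤ)-2),
      (by norm_num : (2:ℤ) - 1 = 1), negB q hq, negF q hq] at h
  rw [h]; ring

lemma Grel (n : ℕ) : hS q (2*n+1) (n:ℤ) 0
    = hS q (2*n) (n:ℤ) 0 - q ^ ((n:ℤ)+1) * hS q (2*n) (n:ℤ) 1 := by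
  have h := hR2 q hq (2*n) (n:ℤ) 0
  rw [(by push_cast; ring : ((2*n:ℕ):ℤ) + 1 - (n:ℤ) - 0 = (n:ℤ)+1),
      (by ring : (0:ℤ) + 1 = 1), negF q hq] at h
  rw [h]; ring

lemma Erel (n : ℕ) : hS q (2*(n+1)) ((n:ℤ)+1) 0 = hS q (2*n+1) ((n:ℤ)+1) 0 := by
  have h := hR2 q hq (2*n+1) ((n:ℤ)+1) 0
  rw [(by push_cast; ring : ((2*n+1:ℕ):ℤ) + 1 - ((n:ℤ)+1) - 0 = (n:ℤ)+1),
      (by ring : (n:ℤ) + 1 - 1 = (n:ℤ)), (by ring : (0:ℤ) + 1 = 1),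
      Zzero q hq] at h
  rw [(by ring : 2*(n+1) = 2*n+1+1), h]; ring

lemma Frel (n : ℕ) : hS q (2*(n+1)) ((n:ℤ)+1) 1
    = q ^ ((n:ℤ)+1) * hS q (2*n+1) ((n:ℤ)+1) 0 := by
  have h := hR1 q hq (2*n+1) ((n:ℤ)+1) 1
  rw [(by ring : (n:ℤ) + 1 + 1 - 1 = (n:ℤ)+1), (by ring : (n:ℤ)+1-1 = (n:ℤ)),
      (by norm_num : (1:ℤ) - 1 = 0), Zzero q hq] at h
  rw [(by ring : 2*(n+1) = 2*n+1+1), h]; ring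

lemma Brel (n : ℕ) : hS q (2*(n+1)) ((n:ℤ)+2) 0
    = hS q (2*n+1) ((n:ℤ)+1) 0 + q ^ ((n:ℤ)+1) * hS q (2*n+1) ((n:ℤ)-1) 2 := by
  have h := hR1 q hq (2*n+1) ((n:ℤ)+2) 0
  have h3 := hR3 q hq (2*n+1) ((n:ℤ)-1) (-1)
  rw [(by ring : (n:ℤ) - 1 + 3 = (n:ℤ)+2), (by norm_num : (-1:ℤ) + 3 = 2)] at h3
  rw [(by ring : (n:ℤ) + 2 + 0 - 1 = (n:ℤ)+1), (by ring : (n:ℤ)+2-1 = (n:ℤ)+1),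
      (by norm_num : (0:ℤ) - 1 = -1), h3] at h
  rw [(by ring : 2*(n+1) = 2*n+1+1), h]

lemma zpow_nat (n : ℕ) : q ^ ((n:ℕ):ℤ) = q ^ n := zpow_natCast q n

lemma main (n : ℕ) :
    hS q (2*n) (n:ℤ) 0 = P q n ∧
    hS q (2*n) (n:ℤ) 1 = q ^ n * P q n ∧
    hS q (2*n) ((n:ℤ)+1) 0 = (1 - q ^ n) * P q n ∧
    hS q (2*n+1) ((n:ℤ)+1) 0 = P q (n+1) ∧
    hS q (2*n+1) ((n:ℤ)-1) 2 = -P q (n+1) := by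
  induction n with
  | zero =>
    have hE : hS q 0 (0:ℤ) 0 = 1 := by
      rw [hS]; norm_num; simp [eps, qT, Tf, qb]
    have hF : hS q 0 (0:ℤ) 1 = 1 := by
      rw [hS]; norm_num; simp [eps, qT, Tf, qb]
    have hB : hS q 0 (1:ℤ) 0 = 0 := by
      rw [hS]; norm_num; simp [eps, qT, Tf, qb]
    have hA := Arel q hq 0
    have hW := Wrel q hq 0
    simp only [Nat.cast_zero, mul_zero, zero_add, zpow_zero] at hA hW hE hF hB ⊢
    rw [hA, hW, hE, hF, hB]
    simp [P]
  | succ n ih =>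
    obtain ⟨hE, hF, hB, hA, hW⟩ := ih
    have pc : ((n+1:ℕ):ℤ) = (n:ℤ)+1 := by push_cast; ring
    have pc2 : ((n+1:ℕ):ℤ)+1 = (n:ℤ)+2 := by push_cast; ring
    have zp : q ^ ((n:ℤ)+1) = q ^ (n+1) := by
      rw [(by push_cast; ring : (n:ℤ)+1 = ((n+1:ℕ):ℤ)), zpow_natCast]
    have hE' : hS q (2*(n+1)) ((n+1:ℕ):ℤ) 0 = P q (n+1) := by
      rw [pc, Erel q hq, hA]
    have hF' : hS q (2*(n+1)) ((n+1:ℕ):ℤ) 1 = q ^ (n+1) * P q (n+1) := by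
      rw [pc, Frel q hq, hA, zp]
    have hB' : hS q (2*(n+1)) (((n+1:ℕ):ℤ)+1) 0 = (1 - q ^ (n+1)) * P q (n+1) := by
      rw [pc2, Brel q hq, hA, hW, zp]; ring
    have hpow : q ^ (2*(n+1)) = q ^ (n+1) * q ^ (n+1) := by rw [two_mul, pow_add]
    refine ⟨hE', hF', hB', ?_, ?_⟩
    · rw [Arel q hq (n+1), hB', hF', zpow_natCast, P_succ q hq (n+1)]
      linear_combination (-(P q (n+1))) * hpow
    · rw [Wrel q hq (n+1), hB', hF', zpow_natCast, P_succ q hq (n+1)]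
      linear_combination (P q (n+1)) * hpow

lemma Gthm (n : ℕ) : hS q (2*n+1) (n:ℤ) 0 = (1 - q ^ (2*n+1)) * P q n := by
  obtain ⟨hE, hF, -, -, -⟩ := main q hq n
  have zp : q ^ ((n:ℤ)+1) = q ^ (n+1) := by
    rw [(by push_cast; ring : (n:ℤ)+1 = ((n+1:ℕ):ℤ)), zpow_natCast]
  rw [Grel q hq n, hE, hF, zp]
  have hpow : q ^ (2*n+1) = q ^ (n+1) * q ^ n := by rw [← pow_add]; ring_nf
  linear_combination (P q n) * hpow

lemma half_sum (n : ℕ) :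
    ∑ t ∈ Icc (0:ℤ) (n:ℤ),
      eps t * (qT q t - qT q (t+2)) * qb q (2*n+1) ((n:ℤ) - t)
    = hS q (2*n+1) (n:ℤ) 0 := by
  have key : hS q (2*n+1) (n:ℤ) 0 - hS q (2*n+1) (n:ℤ) 2
      = ∑ t ∈ Icc ((n:ℤ) - ((2*n+1:ℕ):ℤ)) (n:ℤ),
          eps t * (qT q t - qT q (t+2)) * qb q (2*n+1) ((n:ℤ) - t) := by
    rw [hS, hS, ← Finset.sum_sub_distrib]
    apply Finset.sum_congr rfl
    intro t _
    rw [(by ring : t + (0:ℤ) = t)]; ring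
  have hsplit : ∑ t ∈ Icc ((n:ℤ) - ((2*n+1:ℕ):ℤ)) (n:ℤ),
          eps t * (qT q t - qT q (t+2)) * qb q (2*n+1) ((n:ℤ) - t)
      = (∑ t ∈ Icc ((n:ℤ) - ((2*n+1:ℕ):ℤ)) (-1:ℤ),
          eps t * (qT q t - qT q (t+2)) * qb q (2*n+1) ((n:ℤ) - t))
      + ∑ t ∈ Icc (0:ℤ) (n:ℤ),
          eps t * (qT q t - qT q (t+2)) * qb q (2*n+1) ((n:ℤ) - t) := by
    rw [show Icc ((n:ℤ) - ((2*n+1:ℕ):ℤ)) (n:ℤ)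
        = Icc ((n:ℤ) - ((2*n+1:ℕ):ℤ)) (-1:ℤ) ∪ Icc (0:ℤ) (n:ℤ) by
      ext x; simp only [Finset.mem_Icc, Finset.mem_union]; push_cast; omega]
    exact Finset.sum_union (by
      rw [Finset.disjoint_left]; intro x hx hx'
      simp only [Finset.mem_Icc] at hx hx'; omega)
  have hrefl : ∑ t ∈ Icc ((n:ℤ) - ((2*n+1:ℕ):ℤ)) (-1:ℤ),
          eps t * (qT q t - qT q (t+2)) * qb q (2*n+1) ((n:ℤ) - t)
      = ∑ t ∈ Icc (0:ℤ) (n:ℤ),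
          eps t * (qT q t - qT q (t+2)) * qb q (2*n+1) ((n:ℤ) - t) := by
    rw [sum_reflect _ _ _ (-1), (by norm_num : (-1:ℤ) - (-1) = 0),
        (by push_cast; ring : (-1:ℤ) - ((n:ℤ) - ((2*n+1:ℕ):ℤ)) = (n:ℤ))]
    apply Finset.sum_congr rfl
    intro t _
    have p1 : eps (-1 - t) = -eps t := eps_neg_one_sub t
    have p2 : qT q (-1 - t) = qT q (t+2) := by
      rw [qT, (by ring : (-1:ℤ) - t = 1 - (t+2)), Tf_one_sub, qT]
    have p3 : qT q (-1 - t + 2) = qT q t := by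
      rw [qT, (by ring : (-1:ℤ) - t + 2 = 1 - t), Tf_one_sub, qT]
    have p4 : qb q (2*n+1) ((n:ℤ) - (-1 - t)) = qb q (2*n+1) ((n:ℤ) - t) := by
      rw [qb_symm q hq (2*n+1) ((n:ℤ) - t)]
      congr 1; push_cast; ring
    rw [p1, p2, p3, p4]; ring
  have hneg : hS q (2*n+1) (n:ℤ) 0 = -hS q (2*n+1) (n:ℤ) 2 := by
    have h := hR4 q hq (2*n+1) (n:ℤ) 0
    rw [(by push_cast; ring : ((2*n+1:ℕ):ℤ) - (n:ℤ) - 1 = (n:ℤ)),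
        (by norm_num : (2:ℤ) - 0 = 2)] at h
    exact h
  rw [hsplit, hrefl] at key
  linear_combination (-key - hneg) / 2


omit hq in
lemma qPoch_succ (a : ℂ) (n : ℕ) :
    qPoch a q (n+1) = qPoch a q n * (1 - a * q ^ n) := Finset.prod_range_succ _ n

omit hq in
lemma qb_zero (N : ℕ) : qb q N 0 = 1 := by
  induction N with
  | zero => simp [qb]
  | succ N ih => rw [qb_pascal, qb_out q N _ (by omega : (0:ℤ)-1 < 0 ∨ _), ih]; simp

omit hq in
lemma qb_diag (N : ℕ) : qb q N N = 1 := by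
  induction N with
  | zero => simp [qb]
  | succ N ih =>
    rw [(by push_cast; ring : ((N+1:ℕ):ℤ) = (N:ℤ)+1), qb_pascal,
      qb_out q N ((N:ℤ)+1) (by omega), add_sub_cancel_right, ih]
    ring

omit hq in
lemma qb_mul (N k : ℕ) (h : k ≤ N) :
    qb q N k * (qPoch q q k * qPoch q q (N-k)) = qPoch q q N := by
  induction N generalizing k with
  | zero => interval_cases k; simp [qb, qPoch]
  | succ N ih =>
    rcases Nat.eq_or_lt_of_le h with rfl | hlt
    · rw [qb_diag]; simp [qPoch]
    have hkN : k ≤ N := by omega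
    rcases Nat.eq_zero_or_pos k with rfl | hk
    · simp only [Nat.cast_zero, qb_zero, Nat.sub_zero, one_mul]
      simp [qPoch]
    obtain ⟨j, rfl⟩ : ∃ j, k = j + 1 := ⟨k - 1, by omega⟩
    obtain ⟨m, rfl⟩ : ∃ m, N = j + 1 + m := ⟨N - (j+1), by omega⟩
    have e1 : ((j+1:ℕ):ℤ) - 1 = (j:ℤ) := by push_cast; ring
    have hz : q ^ ((j+1:ℕ):ℤ) = q ^ (j+1) := zpow_natCast q (j+1)
    rw [qb_pascal, e1, hz]
    have ih1 := ih j (by omega)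
    have ih2 := ih (j+1) (by omega)
    have r1 : j + 1 + m - j = m + 1 := by omega
    have r2 : j + 1 + m - (j+1) = m := by omega
    have r3 : j + 1 + m + 1 - (j+1) = m + 1 := by omega
    rw [r1] at ih1; rw [r2] at ih2; rw [r3]
    rw [qPoch_succ q q m] at ih1
    rw [qPoch_succ q q j] at ih2
    rw [qPoch_succ q q (j+1+m), qPoch_succ q q j, qPoch_succ q q m]
    linear_combination (1 - q*q^j) * ih1 + q^(j+1) * (1 - q*q^m) * ih2

omit hq in
lemma qPoch_shift (k : ℕ) : (1 - q) * qPoch (q*q) q k = qPoch q q (k+1) := by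
  rw [qPoch, qPoch, Finset.prod_range_succ' _ k, mul_comm]
  congr 1
  · apply Finset.prod_congr rfl
    intro j _
    ring
  · norm_num

omit hq in
lemma term_eq (hq0 : q ≠ 0) (hP : ∀ m, qPoch q q m ≠ 0) (n t : ℕ) (ht : t ≤ n) :
    (1 - q ^ (2*t+1)) / (1-q) *
      (if t % 3 = 0 then q ^ ((t^2-t)/2)
        else if t % 3 = 2 then -q ^ ((t^2-t)/2) else 0)
      / (qPoch q q (n-t) * qPoch (q*q) q (n+t))
    = eps (t:ℤ) * (qT q (t:ℤ) - qT q ((t:ℤ)+2)) * qb q (2*n+1) ((n:ℤ) - (t:ℤ))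
        / qPoch q q (2*n+1) := by
  have h1 : (1:ℂ) - q ≠ 0 := by
    have := hP 1; rw [qPoch] at this; simpa using this
  have hif : (if t % 3 = 0 then q ^ ((t^2-t)/2)
        else if t % 3 = 2 then -q ^ ((t^2-t)/2) else 0)
      = eps (t:ℤ) * q ^ ((t^2-t)/2) := by
    have h3 : ((t:ℤ)) % 3 = ((t % 3 : ℕ) : ℤ) := by omega
    have : t % 3 = 0 ∨ t % 3 = 1 ∨ t % 3 = 2 := by omega
    rcases this with h | h | h <;> norm_num [eps, h3, h]
  have hqT : (q : ℂ) ^ ((t^2-t)/2) = qT q (t:ℤ) := by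
    rw [qT, ← zpow_natCast q ((t^2-t)/2)]
    congr 1
    rw [Tf]
    have e : (((t^2 - t)/2 : ℕ) : ℤ) = (((t^2 - t : ℕ) : ℤ) / 2) := by
      exact_mod_cast Int.natCast_div (t^2 - t) 2
    rw [e, Nat.cast_sub (Nat.le_self_pow two_ne_zero t)]; push_cast; congr 1; ring
  have hsub : (1 - q ^ (2*t+1)) * qT q (t:ℤ) = qT q (t:ℤ) - qT q ((t:ℤ)+2) := by
    have e2 : qT q ((t:ℤ)+2) = qT q (t:ℤ) * q ^ (2*t+1) := by
      rw [qT, qT, (by ring : (t:ℤ)+2 = ((t:ℤ)+1)+1), Tf_add_one, Tf_add_one,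
          ← zpow_natCast q (2*t+1)]
      rw [← zpow_add₀ hq0]
      congr 1; push_cast; ring
    rw [e2]; ring
  have hden : (1-q) * qPoch (q*q) q (n+t) = qPoch q q (n+t+1) := qPoch_shift q (n+t)
  have hqb : qb q (2*n+1) ((n:ℤ) - (t:ℤ)) * (qPoch q q (n-t) * qPoch q q (n+t+1))
      = qPoch q q (2*n+1) := by
    have := qb_mul q (2*n+1) (n-t) (by omega)
    rw [(by omega : 2*n+1 - (n-t) = n+t+1),
        (by push_cast [Nat.cast_sub ht]; ring : ((n-t : ℕ):ℤ) = (n:ℤ) - (t:ℤ))] at this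
    exact this
  have hQ : qPoch (q*q) q (n+t) ≠ 0 := by
    intro h0
    apply hP (n+t+1)
    rw [← hden, h0, mul_zero]
  rw [hif, hqT]
  have lhs_eq : (1 - q ^ (2*t+1)) / (1-q) * (eps (t:ℤ) * qT q (t:ℤ))
      / (qPoch q q (n-t) * qPoch (q*q) q (n+t))
      = eps (t:ℤ) * ((1 - q ^ (2*t+1)) * qT q (t:ℤ))
        / (qPoch q q (n-t) * ((1-q) * qPoch (q*q) q (n+t))) := by
    field_simp
  rw [lhs_eq, hsub, hden, div_eq_div_iff (mul_ne_zero (hP _) (hP _)) (hP _)]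
  linear_combination (-(eps (t:ℤ) * (qT q (t:ℤ) - qT q ((t:ℤ)+2)))) * hqb

omit hq in
lemma key_sum (hq0 : q ≠ 0) (hP : ∀ m, qPoch q q m ≠ 0) (n : ℕ) :
    ∑ t ∈ Finset.range (n+1),
      ((1 - q ^ (2*t+1)) / (1-q) *
        (if t % 3 = 0 then q ^ ((t^2-t)/2)
          else if t % 3 = 2 then -q ^ ((t^2-t)/2) else 0)
        / (qPoch q q (n-t) * qPoch (q*q) q (n+t)))
    = (1 - q ^ (2*n+1)) * P q n / qPoch q q (2*n+1) := by
  have step1 : ∑ t ∈ Finset.range (n+1),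
      ((1 - q ^ (2*t+1)) / (1-q) *
        (if t % 3 = 0 then q ^ ((t^2-t)/2)
          else if t % 3 = 2 then -q ^ ((t^2-t)/2) else 0)
        / (qPoch q q (n-t) * qPoch (q*q) q (n+t)))
      = ∑ t ∈ Finset.range (n+1),
        eps (t:ℤ) * (qT q (t:ℤ) - qT q ((t:ℤ)+2)) * qb q (2*n+1) ((n:ℤ)-(t:ℤ))
          / qPoch q q (2*n+1) := by
    apply Finset.sum_congr rfl
    intro t ht
    exact term_eq q hq0 hP n t (by simp only [Finset.mem_range] at ht; omega)
  rw [step1, ← Finset.sum_div]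
  have step2 : ∑ t ∈ Finset.range (n+1),
        eps (t:ℤ) * (qT q (t:ℤ) - qT q ((t:ℤ)+2)) * qb q (2*n+1) ((n:ℤ)-(t:ℤ))
      = ∑ t ∈ Icc (0:ℤ) (n:ℤ),
        eps t * (qT q t - qT q (t+2)) * qb q (2*n+1) ((n:ℤ) - t) := by
    apply Finset.sum_nbij' (fun (t:ℕ) => (t:ℤ)) (fun (t:ℤ) => t.toNat) <;>
      intros a ha <;>
      simp_all [Finset.mem_range, Finset.mem_Icc] <;> omega
  rw [step2, half_sum q hq0 n, Gthm q hq0 n]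
end

theorem bailey_pair_5 (q : ℂ) (hq0 : 0 < ‖q‖) (hq1 : ‖q‖ < 1) :
    (IsBaileyPair q q
      (fun m => (1 - q ^ (2 * m + 1)) / (1 - q) *
        (if m % 3 = 0 then q ^ ((m ^ 2 - m) / 2)
          else if m % 3 = 2 then -q ^ ((m ^ 2 - m) / 2) else 0))
      (fun n => qPoch (-1) (q ^ 3) n / (qPoch q q (2 * n) * qPoch (-1) q n))) ∧
    qPoch (-1) (q ^ 3) 0 / (qPoch q q (2 * 0) * qPoch (-1) q 0) = 1 ∧
    (∀ n : ℕ, 1 ≤ n →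
      qPoch (-1) (q ^ 3) n / (qPoch q q (2 * n) * qPoch (-1) q n) =
        qPoch (-q ^ 3) (q ^ 3) (n - 1) / (qPoch q q (2 * n) * qPoch (-q) q (n - 1))) := by
  have hq : q ≠ 0 := by
    intro h; rw [h] at hq0; simp at hq0
  have habs : ∀ k : ℕ, 1 ≤ k → ‖q ^ k‖ < 1 := by
    intro k hk
    rw [norm_pow]
    exact pow_lt_one₀ (norm_nonneg q) hq1 (by omega)
  have hne1 : ∀ k : ℕ, 1 ≤ k → (1:ℂ) - q ^ k ≠ 0 := by
    intro k hk h
    have e : q ^ k = 1 := by linear_combination -h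
    have := habs k hk
    rw [e] at this; simp at this
  have hP : ∀ m, qPoch q q m ≠ 0 := by
    intro m
    rw [qPoch]
    apply Finset.prod_ne_zero_iff.mpr
    intro t _
    rw [(by rw [pow_succ]; ring : q * q ^ t = q ^ (t+1))]
    exact hne1 (t+1) (by omega)
  have hM : ∀ m, qPoch (-1) q m ≠ 0 := by
    intro m
    rw [qPoch]
    apply Finset.prod_ne_zero_iff.mpr
    intro t _
    rcases Nat.eq_zero_or_pos t with rfl | h
    · norm_num
    · intro h0
      have e : q ^ t = -1 := by linear_combination h0
      have := habs t h
      rw [e] at this; simp at this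
  refine ⟨?_, ?_, ?_⟩
  · intro n
    simp only
    rw [key_sum q hq hP n]
    have hfac : qPoch (-1) (q^3) n = P q n * qPoch (-1) q n := by
      rw [qPoch, qPoch, P, ← Finset.prod_mul_distrib]
      apply Finset.prod_congr rfl
      intro j _
      ring
    have h2 : qPoch q q (2*n+1) = qPoch q q (2*n) * (1 - q ^ (2*n+1)) := by
      rw [qPoch_succ, pow_succ]; ring_nf
    rw [hfac, h2,
      div_eq_div_iff (mul_ne_zero (hP (2*n)) (hM n))
        (mul_ne_zero (hP (2*n)) (hne1 (2*n+1) (by omega)))]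
    ring
  · simp [qPoch]
  · intro n hn
    obtain ⟨m, rfl⟩ : ∃ m, n = m + 1 := ⟨n-1, by omega⟩
    simp only [Nat.add_sub_cancel]
    have h3 : qPoch (-1) (q^3) (m+1) = 2 * qPoch (-(q^3)) (q^3) m := by
      rw [qPoch, Finset.prod_range_succ', qPoch, mul_comm]
      congr 1
      · norm_num
      · apply Finset.prod_congr rfl
        intro j _
        ring
    have h4 : qPoch (-1) q (m+1) = 2 * qPoch (-q) q m := by
      rw [qPoch, Finset.prod_range_succ', qPoch, mul_comm]
      congr 1
      · norm_num
      · apply Finset.prod_congr rfl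
        intro j _
        ring
    rw [h3, h4,
      (by ring : qPoch q q (2*(m+1)) * (2 * qPoch (-q) q m)
        = 2 * (qPoch q q (2*(m+1)) * qPoch (-q) q m)),
      mul_div_mul_left _ _ (two_ne_zero)]
end
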